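/- Let V_n denote the monic Chebyshev polynomials of the second kind and T_n those of the first kind. Then the span of {V_{6k} : k ≥ 0} ∪ {V_{6k+4} : k ≥ 0} equals ℝ·1 ⊕ T_3 · E, where E = span{V_{6k+1}, V_{6k+3} : k ≥ 0}. -/

import Mathlib

/-- Monic Chebyshev polynomial of the first kind: `Tp n` evaluated at `2 cos θ` is `2 cos (n θ)`. -/
noncomputable def Tp (n : ℤ) : Polynomial ℝ :=
  Polynomial.C 2 * (Polynomial.Chebyshev.T ℝ n).comp (Polynomial.C (1 / 2) * Polynomial.X)

/-- Monic Chebyshev polynomial of the second kind: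
`Vp n` evaluated at `2 cos θ` is `sin ((n+1) θ) / sin θ`. -/
noncomputable def Vp (n : ℤ) : Polynomial ℝ :=
  (Polynomial.Chebyshev.U ℝ n).comp (Polynomial.C (1 / 2) * Polynomial.X)

/-- `E = span{V_{6k+1}, V_{6k+3} : k ≥ 0}`. -/
noncomputable def E : Submodule ℝ (Polynomial ℝ) :=
  Submodule.span ℝ
    ({p : Polynomial ℝ | ∃ k : ℕ, p = Vp (6 * k + 1)} ∪
      {p : Polynomial ℝ | ∃ k : ℕ, p = Vp (6 * k + 3)})

open Polynomial Polynomial.Chebyshev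

lemma cheb_key (n : ℤ) : 2 * T ℝ 3 * U ℝ n = U ℝ (n + 3) + U ℝ (n - 3) := by
  have h3 : T ℝ 3 = 2 * X * (2 * X ^ 2 - 1) - X := by
    have := T_add_two ℝ 1
    norm_num at this
    rw [this, T_two]
  have e1 := U_add_two ℝ (n + 1)
  rw [show n + 1 + 2 = n + 3 by ring, show n + 1 + 1 = n + 2 by ring] at e1
  have e2 := U_add_two ℝ n
  have e4 := U_sub_two ℝ (n - 1)
  rw [show n - 1 - 2 = n - 3 by ring, show n - 1 - 1 = n - 2 by ring] at e4
  have e3 := U_sub_two ℝ n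
  have e5 := U_sub_one ℝ n
  rw [h3, e1, e4, e3, e2, e5]
  ring

lemma keyV (n : ℤ) : Tp 3 * Vp n = Vp (n + 3) + Vp (n - 3) := by
  unfold Tp Vp
  rw [← Polynomial.add_comp, ← cheb_key, Polynomial.mul_comp, Polynomial.mul_comp]
  congr 2
  exact (Polynomial.C_eq_natCast 2).trans (by norm_num)

lemma Vp_zero : Vp 0 = 1 := by
  simp [Vp, U_zero]

lemma Vp_neg_two : Vp (-2) = -1 := by
  simp [Vp, U_neg_two]

lemma Tp3_eval_zero : (Tp 3).eval 0 = 0 := by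
  have h3 : T ℝ 3 = 2 * X * (2 * X ^ 2 - 1) - X := by
    have := T_add_two ℝ 1
    norm_num at this
    rw [this, T_two]
  simp [Tp, h3, eval_comp]

theorem stmt_19 :
    Submodule.span ℝ
        ({p : Polynomial ℝ | ∃ k : ℕ, p = Vp (6 * k)} ∪
          {p : Polynomial ℝ | ∃ k : ℕ, p = Vp (6 * k + 4)}) =
      Submodule.span ℝ {(1 : Polynomial ℝ)} ⊔
        Submodule.span ℝ {p : Polynomial ℝ | ∃ q ∈ E, p = Tp 3 * q} ∧
      Submodule.span ℝ {(1 : Polynomial ℝ)} ⊓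
        Submodule.span ℝ {p : Polynomial ℝ | ∃ q ∈ E, p = Tp 3 * q} = ⊥ := by
  set L := Submodule.span ℝ
      ({p : Polynomial ℝ | ∃ k : ℕ, p = Vp (6 * k)} ∪
        {p : Polynomial ℝ | ∃ k : ℕ, p = Vp (6 * k + 4)}) with hL
  set R1 := Submodule.span ℝ {(1 : Polynomial ℝ)} with hR1
  set R2 := Submodule.span ℝ {p : Polynomial ℝ | ∃ q ∈ E, p = Tp 3 * q} with hR2
  have hE1 : ∀ k : ℕ, Vp (6 * k + 1) ∈ E := fun k =>
    Submodule.subset_span (Or.inl ⟨k, rfl⟩)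
  have hE3 : ∀ k : ℕ, Vp (6 * k + 3) ∈ E := fun k =>
    Submodule.subset_span (Or.inr ⟨k, rfl⟩)
  have hTR2 : ∀ q ∈ E, Tp 3 * q ∈ R2 := fun q hq =>
    Submodule.subset_span ⟨q, hq, rfl⟩
  have hL0 : ∀ k : ℕ, Vp (6 * k) ∈ L := fun k =>
    Submodule.subset_span (Or.inl ⟨k, rfl⟩)
  have hL4 : ∀ k : ℕ, Vp (6 * k + 4) ∈ L := fun k =>
    Submodule.subset_span (Or.inr ⟨k, rfl⟩)
  have hone : (1 : Polynomial ℝ) ∈ R1 ⊔ R2 :=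
    Submodule.mem_sup_left (Submodule.subset_span rfl)
  have h0 : ∀ k : ℕ, Vp (6 * k) ∈ R1 ⊔ R2 := by
    intro k
    induction k with
    | zero =>
      rw [show (6 * ((0 : ℕ) : ℤ)) = 0 by simp, Vp_zero]
      exact hone
    | succ n ih =>
      have key := keyV (6 * n + 3)
      rw [show (6 * (n : ℤ) + 3 + 3) = 6 * ((n + 1 : ℕ) : ℤ) by push_cast; ring,
        show (6 * (n : ℤ) + 3 - 3) = 6 * n by ring] at key
      have heq : Vp (6 * ((n + 1 : ℕ) : ℤ)) = Tp 3 * Vp (6 * n + 3) - Vp (6 * n) := by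
        linear_combination -key
      rw [heq]
      exact sub_mem (Submodule.mem_sup_right (hTR2 _ (hE3 n))) ih
  have h4 : ∀ k : ℕ, Vp (6 * k + 4) ∈ R1 ⊔ R2 := by
    intro k
    induction k with
    | zero =>
      have key := keyV 1
      norm_num [Vp_neg_two] at key
      rw [show (6 * ((0 : ℕ) : ℤ) + 4) = 4 by simp]
      have heq : Vp (4 : ℤ) = Tp 3 * Vp 1 + 1 := by linear_combination -key
      rw [heq]
      have h1 : Vp ((1 : ℤ)) ∈ E := by
        have := hE1 0
        rwa [show (6 * ((0 : ℕ) : ℤ) + 1) = 1 by simp] at this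
      exact add_mem (Submodule.mem_sup_right (hTR2 _ h1)) hone
    | succ n ih =>
      have key := keyV (6 * n + 7)
      rw [show (6 * (n : ℤ) + 7 + 3) = 6 * ((n + 1 : ℕ) : ℤ) + 4 by push_cast; ring,
        show (6 * (n : ℤ) + 7 - 3) = 6 * n + 4 by ring,
        show (6 * (n : ℤ) + 7) = 6 * ((n + 1 : ℕ) : ℤ) + 1 by push_cast; ring] at key
      have heq : Vp (6 * ((n + 1 : ℕ) : ℤ) + 4) =
          Tp 3 * Vp (6 * ((n + 1 : ℕ) : ℤ) + 1) - Vp (6 * n + 4) := by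
        linear_combination -key
      rw [heq]
      exact sub_mem (Submodule.mem_sup_right (hTR2 _ (hE1 (n + 1)))) ih
  constructor
  · apply le_antisymm
    · rw [hL, Submodule.span_le]
      rintro p (⟨k, rfl⟩ | ⟨k, rfl⟩)
      · exact h0 k
      · exact h4 k
    · apply sup_le
      · rw [hR1, Submodule.span_le]
        rintro p rfl
        have := hL0 0
        rwa [show (6 * ((0 : ℕ) : ℤ)) = 0 by simp, Vp_zero] at this
      · rw [hR2, Submodule.span_le]
        rintro p ⟨q, hq, rfl⟩
        have hsub : E ≤ Submodule.comap (LinearMap.mulLeft ℝ (Tp 3)) L := by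
          rw [E, Submodule.span_le]
          rintro r (⟨k, rfl⟩ | ⟨k, rfl⟩)
          · simp only [Set.mem_preimage, SetLike.mem_coe, Submodule.mem_comap,
              LinearMap.mulLeft_apply]
            have key := keyV (6 * k + 1)
            rw [show (6 * (k : ℤ) + 1 + 3) = 6 * k + 4 by ring,
              show (6 * (k : ℤ) + 1 - 3) = 6 * k - 2 by ring] at key
            rw [key]
            refine add_mem (hL4 k) ?_
            rcases k with _ | j
            · rw [show (6 * ((0 : ℕ) : ℤ) - 2) = -2 by simp, Vp_neg_two]
              have h1 := hL0 0
              rw [show (6 * ((0 : ℕ) : ℤ)) = 0 by simp, Vp_zero] at h1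
              exact neg_mem h1
            · have h1 := hL4 j
              rwa [show (6 * (j : ℤ) + 4) = 6 * ((j + 1 : ℕ) : ℤ) - 2 by push_cast; ring] at h1
          · simp only [Set.mem_preimage, SetLike.mem_coe, Submodule.mem_comap,
              LinearMap.mulLeft_apply]
            have key := keyV (6 * k + 3)
            rw [show (6 * (k : ℤ) + 3 + 3) = 6 * ((k + 1 : ℕ) : ℤ) by push_cast; ring,
              show (6 * (k : ℤ) + 3 - 3) = 6 * k by ring] at key
            rw [key]
            exact add_mem (hL0 (k + 1)) (hL0 k)
        exact hsub hq
  · rw [eq_bot_iff]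
    intro p hp
    rw [Submodule.mem_inf] at hp
    obtain ⟨hp1, hp2⟩ := hp
    have hker : R2 ≤ LinearMap.ker (Polynomial.leval (0 : ℝ)) := by
      rw [hR2, Submodule.span_le]
      rintro r ⟨q, hq, rfl⟩
      simp [LinearMap.mem_ker, Tp3_eval_zero]
    have h00 : p.eval 0 = 0 := hker hp2
    obtain ⟨c, rfl⟩ := Submodule.mem_span_singleton.mp hp1
    simp only [Polynomial.smul_eq_C_mul, mul_one] at h00 ⊢
    simp at h00
    simp [h00]
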